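/- Fix h > 0 and the uniform grid x_ν = νh with cells I_ν = [x_ν − h/2, x_ν + h/2). Let w : ℝ → ℝ be the piecewise-linear function given on each cell by w(x) = v̄_ν + v'_ν·(x − x_ν)/h for x ∈ I_ν, where (v̄_ν) and (v'_ν) are given real sequences. Then the exact average of w over the staggered cell [x_ν, x_{ν+1}] is (1/h)∫_{x_ν}^{x_{ν+1}} w(x) dx = (v̄_ν + v̄_{ν+1})/2 + (v'_ν − v'_{ν+1})/8. -/

import Mathlib

open MeasureTheory intervalIntegral

/-- The piecewise-linear function with cell averages `v̄_ν` and scaled slopes `v'_ν`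
on the uniform grid `x_ν = νh`, cells `I_ν = [x_ν − h/2, x_ν + h/2)`:
for `x ∈ I_ν` (i.e. `ν = ⌊x/h + 1/2⌋`), `w(x) = v̄_ν + v'_ν·(x − x_ν)/h`. -/
noncomputable def piecewiseLinear (h : ℝ) (v d : ℤ → ℝ) (x : ℝ) : ℝ :=
  let ν : ℤ := ⌊x / h + 1 / 2⌋
  v ν + d ν * (x - ν * h) / h

lemma lin_hasDerivAt (c k x0 h : ℝ) (x : ℝ) :
    HasDerivAt (fun x => c * x + k * (x - x0) ^ 2 / (2 * h)) (c + k * (x - x0) / h) x := by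
  have h1 : HasDerivAt (fun x : ℝ => c * x) c x := by
    simpa using (hasDerivAt_id x).const_mul c
  have h2 : HasDerivAt (fun x : ℝ => (x - x0) ^ 2) (2 * (x - x0)) x := by
    have := ((hasDerivAt_id x).sub_const x0).fun_pow 2
    simpa [mul_comm] using this
  have h3 : HasDerivAt (fun x : ℝ => k * (x - x0) ^ 2 / (2 * h))
      (k * (2 * (x - x0)) / (2 * h)) x := by
    simpa [mul_div_assoc] using ((h2.const_mul k).div_const (2 * h))
  have := h1.fun_add h3
  refine HasDerivAt.congr_deriv this ?_
  rcases eq_or_ne h 0 with rfl | hne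
  · simp
  · field_simp

lemma lin_integral (c k x0 h a b : ℝ) :
    ∫ x in a..b, (c + k * (x - x0) / h)
      = (c * b + k * (b - x0) ^ 2 / (2 * h)) - (c * a + k * (a - x0) ^ 2 / (2 * h)) := by
  apply intervalIntegral.integral_eq_sub_of_hasDerivAt
  · intro x _
    exact lin_hasDerivAt c k x0 h x
  · exact (Continuous.intervalIntegrable (by fun_prop) a b)

/-- The exact staggered cell average of a piecewise-linear reconstruction:
`(1/h)∫_{x_ν}^{x_{ν+1}} w = (v̄_ν + v̄_{ν+1})/2 + (v'_ν − v'_{ν+1})/8`. -/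
theorem staggered_average_of_piecewise_linear
    (h : ℝ) (hh : 0 < h) (v d : ℤ → ℝ) (ν : ℤ) :
    (1 / h) * ∫ x in (ν * h)..((ν + 1 : ℤ) * h), piecewiseLinear h v d x
      = (v ν + v (ν + 1)) / 2 + (d ν - d (ν + 1)) / 8 := by
  set a : ℝ := (ν : ℝ) * h with ha
  set m : ℝ := a + h / 2 with hm
  have hb : ((ν + 1 : ℤ) : ℝ) * h = a + h := by push_cast; ring
  -- floor identifications
  have floor1 : ∀ x : ℝ, a < x → x < m → ⌊x / h + 1 / 2⌋ = ν := by
    intro x hx1 hx2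
    rw [Int.floor_eq_iff]
    have hx1' : (ν : ℝ) * h < x := hx1
    have hx2' : x < (ν : ℝ) * h + h / 2 := hx2
    constructor
    · have h1 : (ν : ℝ) < x / h := (lt_div_iff₀ hh).2 hx1'
      linarith
    · have h2 : x / h < (ν : ℝ) + 1 / 2 := by
        rw [div_lt_iff₀ hh]; nlinarith
      linarith
  have floor2 : ∀ x : ℝ, m ≤ x → x ≤ a + h → ⌊x / h + 1 / 2⌋ = ν + 1 := by
    intro x hx1 hx2
    rw [Int.floor_eq_iff]
    have hx1' : (ν : ℝ) * h + h / 2 ≤ x := hx1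
    have hx2' : x ≤ (ν : ℝ) * h + h := hx2
    constructor
    · have h1 : (ν : ℝ) + 1 / 2 ≤ x / h := by
        rw [le_div_iff₀ hh]; nlinarith
      push_cast; linarith
    · have h2 : x / h ≤ (ν : ℝ) + 1 := by
        rw [div_le_iff₀ hh]; nlinarith
      push_cast; linarith
  have ham : a ≤ m := by simp [hm]; linarith
  have hmb : m ≤ a + h := by simp [hm]; linarith
  -- a.e. equality on first piece
  have ae1 : ∀ᵐ x ∂(volume : Measure ℝ), x ∈ Set.uIoc a m →
      piecewiseLinear h v d x = v ν + d ν * (x - ν * h) / h := by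
    have hnull : (volume : Measure ℝ) {m} = 0 := measure_singleton m
    filter_upwards [compl_mem_ae_iff.2 hnull] with x hx hmem
    rw [Set.uIoc_of_le ham] at hmem
    have hxm : x < m := lt_of_le_of_ne hmem.2 (by simpa using hx)
    unfold piecewiseLinear
    rw [floor1 x hmem.1 hxm]
  have eq2 : ∀ x ∈ Set.uIcc m (a + h),
      piecewiseLinear h v d x = v (ν + 1) + d (ν + 1) * (x - ((ν : ℝ) + 1) * h) / h := by
    intro x hx
    rw [Set.uIcc_of_le hmb] at hx
    unfold piecewiseLinear
    rw [floor2 x hx.1 hx.2]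
    push_cast
    ring_nf
  have I1 : ∫ x in a..m, piecewiseLinear h v d x
      = ∫ x in a..m, (v ν + d ν * (x - (ν : ℝ) * h) / h) :=
    intervalIntegral.integral_congr_ae ae1
  have I2 : ∫ x in m..(a + h), piecewiseLinear h v d x
      = ∫ x in m..(a + h), (v (ν + 1) + d (ν + 1) * (x - ((ν : ℝ) + 1) * h) / h) :=
    intervalIntegral.integral_congr eq2
  have int1 : IntervalIntegrable (piecewiseLinear h v d) volume a m := by
    refine (Continuous.intervalIntegrable (by fun_prop :
      Continuous fun x => v ν + d ν * (x - (ν : ℝ) * h) / h) a m).congr_ae ?_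
    exact (ae_restrict_iff' measurableSet_uIoc).2 (ae1.mono fun x hx hmem => (hx hmem).symm)
  have int2 : IntervalIntegrable (piecewiseLinear h v d) volume m (a + h) := by
    refine (Continuous.intervalIntegrable (by fun_prop :
      Continuous fun x => v (ν + 1) + d (ν + 1) * (x - ((ν : ℝ) + 1) * h) / h) m (a + h)).congr_ae ?_
    refine (ae_restrict_iff' measurableSet_uIoc).2 (ae_of_all _ fun x hx => ?_)
    exact (eq2 x (Set.uIoc_subset_uIcc hx)).symm
  have split : ∫ x in a..(a + h), piecewiseLinear h v d x
      = (∫ x in a..m, piecewiseLinear h v d x) + ∫ x in m..(a + h), piecewiseLinear h v d x :=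
    (intervalIntegral.integral_add_adjacent_intervals int1 int2).symm
  rw [hb, split, I1, I2, lin_integral, lin_integral]
  have hne : h ≠ 0 := ne_of_gt hh
  simp only [hm, ha]
  field_simp
  ring
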